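/- Let u ≥ 2 and v ≥ 2 be integers and let H be the subgroup of the free group F(a,b) generated by a^u and a*b^v. Then in the reduced word of any element of H, every maximal block of consecutive letters b^{±1} has length a multiple of v; in particular no element of H has a reduced word containing a single letter b^{±1} with letters a^{±1} on both sides. -/

import Mathlib

noncomputable def a : FreeGroup Bool := FreeGroup.of false
noncomputable def b : FreeGroup Bool := FreeGroup.of true

namespace BBlocksAux

/-- "No cancellation" relation between adjacent letters. -/
def C (p q : Bool × Bool) : Prop := p.1 = q.1 → p.2 = q.2

lemma C_refl (p : Bool × Bool) : C p p := fun _ => rfl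

/-- Expansion: replace each `b^{±1}` letter by `n` copies of itself. -/
def expand (n : ℕ) : List (Bool × Bool) → List (Bool × Bool)
  | [] => []
  | p :: t => List.replicate (if p.1 then n else 1) p ++ expand n t

lemma one_le_c (n : ℕ) (hn : 1 ≤ n) (p : Bool × Bool) : 1 ≤ (if p.1 = true then n else 1) := by
  split <;> omega

lemma chain_reduce (w : List (Bool × Bool)) : List.Chain' C (FreeGroup.reduce w) := by
  induction w with
  | nil => exact List.isChain_nil
  | cons x w ih =>
    rw [FreeGroup.reduce.cons]
    rcases h : FreeGroup.reduce w with _ | ⟨y, t⟩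
    · exact List.isChain_singleton _
    · rw [h] at ih
      show List.Chain' C (if x.1 = y.1 ∧ x.2 = !y.2 then t else x :: y :: t)
      split
      · exact ih.tail
      · next hc =>
        refine List.isChain_cons_cons.2 ⟨?_, ih⟩
        intro h1
        by_contra h2
        exact hc ⟨h1, by revert h2; cases hx : x.2 <;> cases hy : y.2 <;> simp⟩

lemma reduce_of_chain : ∀ (w : List (Bool × Bool)), List.Chain' C w → FreeGroup.reduce w = w
  | [], _ => rfl
  | [_], _ => rfl
  | x :: y :: t, h => by
    rw [FreeGroup.reduce.cons, reduce_of_chain (y :: t) h.tail]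
    show (if x.1 = y.1 ∧ x.2 = !y.2 then t else x :: y :: t) = x :: y :: t
    rw [if_neg]
    rintro ⟨h1, h2⟩
    have := (List.isChain_cons_cons.1 h).1 h1
    rw [this] at h2
    cases hy : y.2 <;> simp [hy] at h2

lemma chain_rep_append (k : ℕ) (p : Bool × Bool) (l : List (Bool × Bool))
    (h : List.Chain' C l) (hpl : ∀ q ∈ l.head?, C p q) :
    List.Chain' C (List.replicate k p ++ l) := by
  induction k with
  | zero => simpa
  | succ k ih =>
    rw [List.replicate_succ, List.cons_append]
    refine List.isChain_cons.2 ⟨?_, ih⟩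
    intro q hq
    cases k with
    | zero =>
      simp only [List.replicate_zero, List.nil_append] at hq
      exact hpl q hq
    | succ k =>
      rw [List.replicate_succ, List.cons_append, List.head?_cons] at hq
      obtain rfl : p = q := by simpa using hq
      exact C_refl p

lemma expand_cons_head (n : ℕ) (hn : 1 ≤ n) (r : Bool × Bool) (t : List (Bool × Bool)) :
    (expand n (r :: t)).head? = some r := by
  have h1 : 1 ≤ (if r.1 = true then n else 1) := one_le_c n hn r
  obtain ⟨k, hk⟩ : ∃ k, (if r.1 = true then n else 1) = k + 1 :=
    ⟨(if r.1 = true then n else 1) - 1, by omega⟩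
  show (List.replicate (if r.1 then n else 1) r ++ expand n t).head? = some r
  rw [hk, List.replicate_succ]
  rfl

lemma chain_expand (n : ℕ) (hn : 1 ≤ n) :
    ∀ (w : List (Bool × Bool)), List.Chain' C w → List.Chain' C (expand n w)
  | [], _ => by simp [expand]; exact List.isChain_nil
  | p :: t, h => by
    show List.Chain' C (List.replicate (if p.1 then n else 1) p ++ expand n t)
    refine chain_rep_append _ _ _ (chain_expand n hn t h.tail) ?_
    intro q hq
    cases t with
    | nil => simp [expand] at hq
    | cons r t' =>
      rw [expand_cons_head n hn] at hq
      obtain rfl : r = q := by simpa using hq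
      exact (List.isChain_cons_cons.1 h).1

lemma block_dvd (n : ℕ) (hn : 1 ≤ n) :
    ∀ (w l₁ blk l₂ : List (Bool × Bool)),
      expand n w = l₁ ++ blk ++ l₂ →
      (∀ p ∈ blk, p.1 = true) →
      (∀ p ∈ l₁.getLast?, p.1 = false) →
      (∀ p ∈ l₂.head?, p.1 = false) →
      n ∣ blk.length := by
  intro w
  induction w with
  | nil =>
    intro l₁ blk l₂ hw hb _ _
    have h0 : l₁ ++ blk ++ l₂ = [] := by rw [← hw]; rfl
    simp only [List.append_eq_nil_iff] at h0
    simp [h0.1.2]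
  | cons p t ih =>
    intro l₁ blk l₂ hw hb h1 h2
    rcases eq_or_ne blk [] with rfl | hblk
    · simp
    obtain ⟨k, hexp, hk1, hkt, hkf⟩ :
        ∃ k, expand n (p :: t) = List.replicate k p ++ expand n t ∧ 1 ≤ k ∧
          (p.1 = true → k = n) ∧ (p.1 = false → k = 1) := by
      refine ⟨if p.1 then n else 1, rfl, one_le_c n hn p, ?_, ?_⟩ <;>
        intro h <;> simp [h]
    rw [hexp, List.append_assoc] at hw
    rcases List.append_eq_append_iff.1 hw.symm with ⟨m, hm1, hm2⟩ | ⟨m, hm1, hm2⟩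
    · -- replicate k p = l₁ ++ m,  blk ++ l₂ = m ++ expand n t
      cases l₁ with
      | cons x l₁' =>
        have hne : (x :: l₁') ≠ [] := by simp
        have hlast : (x :: l₁').getLast hne ∈ List.replicate k p := by
          rw [hm1]; exact List.mem_append_left _ (List.getLast_mem hne)
        have hpp := List.eq_of_mem_replicate hlast
        have hpf : p.1 = false := by
          rw [← hpp]
          exact h1 _ (by rw [List.getLast?_eq_getLast hne]; rfl)
        rw [hkf hpf] at hm1
        have hlen := congrArg List.length hm1
        simp only [List.length_replicate, List.length_append, List.length_cons] at hlen
        have hl1 : l₁' = [] := List.eq_nil_of_length_eq_zero (by omega)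
        have hm0 : m = [] := List.eq_nil_of_length_eq_zero (by omega)
        subst hl1 hm0
        rw [List.nil_append] at hm2
        exact ih [] blk l₂ (by simpa using hm2.symm) hb (by simp) h2
      | nil =>
        have hm : m = List.replicate k p := by simpa using hm1.symm
        subst hm
        rcases List.append_eq_append_iff.1 hm2 with ⟨m', hn1, hn2⟩ | ⟨m', hn1, hn2⟩
        · -- replicate k p = blk ++ m', l₂ = m' ++ expand n t
          obtain ⟨q, hq⟩ := List.exists_mem_of_ne_nil blk hblk
          have hqp : q = p := List.eq_of_mem_replicate
            (by rw [hn1]; exact List.mem_append_left _ hq)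
          have hpt : p.1 = true := by rw [← hqp]; exact hb q hq
          cases m' with
          | nil =>
            have hbk : blk = List.replicate k p := by simpa using hn1.symm
            rw [hbk, List.length_replicate, hkt hpt]
          | cons y m'' =>
            have hy : y = p := List.eq_of_mem_replicate
              (by rw [hn1]; exact List.mem_append_right _ (by simp))
            have := h2 y (by rw [hn2]; rfl)
            rw [hy, hpt] at this
            simp at this
        · -- blk = replicate k p ++ m', expand n t = m' ++ l₂
          have hpt : p.1 = true := by
            refine hb p ?_
            rw [hn1]
            refine List.mem_append_left _ ?_
            obtain ⟨k', hk'⟩ : ∃ k', k = k' + 1 := ⟨k - 1, by omega⟩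
            rw [hk', List.replicate_succ]; simp
          have hd : n ∣ m'.length :=
            ih [] m' l₂ (by simpa using hn2)
              (fun q hq => hb q (by rw [hn1]; exact List.mem_append_right _ hq))
              (by simp) h2
          rw [hn1, List.length_append, List.length_replicate, hkt hpt]
          exact dvd_add (dvd_refl n) hd
    · -- l₁ = replicate k p ++ m, expand n t = m ++ (blk ++ l₂)
      cases m with
      | nil =>
        exact ih [] blk l₂ (by simpa using hm2) hb (by simp) h2
      | cons y m' =>
        refine ih (y :: m') blk l₂ (by simpa using hm2) hb ?_ h2
        intro q hq
        refine h1 q ?_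
        rw [hm1, List.getLast?_append_of_ne_nil _ (by simp)]
        exact hq

lemma mk_single_pow (p : Bool × Bool) (m : ℕ) :
    FreeGroup.mk [p] ^ m = FreeGroup.mk (List.replicate m p) := by
  induction m with
  | zero => rw [pow_zero, List.replicate_zero, FreeGroup.one_eq_mk]
  | succ m ih =>
    rw [pow_succ', ih, FreeGroup.mul_mk, List.replicate_succ, List.singleton_append]

lemma inv_of (x : Bool) : (FreeGroup.of x)⁻¹ = FreeGroup.mk [(x, false)] := by
  rw [show FreeGroup.of x = FreeGroup.mk [(x, true)] from rfl, FreeGroup.inv_mk]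
  simp [FreeGroup.invRev]

lemma phi_mk (v : ℤ) (hv : 2 ≤ v) (w : List (Bool × Bool)) :
    FreeGroup.lift (fun x : Bool => if x then b ^ v else a) (FreeGroup.mk w)
      = FreeGroup.mk (expand v.toNat w) := by
  have hnv : ((v.toNat : ℤ)) = v := Int.toNat_of_nonneg (by omega)
  have hbv : (b : FreeGroup Bool) ^ v = FreeGroup.mk (List.replicate v.toNat (true, true)) := by
    conv_lhs => rw [← hnv]
    rw [zpow_natCast, show (b : FreeGroup Bool) = FreeGroup.mk [(true, true)] from rfl,
      mk_single_pow]
  induction w with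
  | nil =>
    rw [show FreeGroup.mk ([] : List (Bool × Bool)) = 1 from (FreeGroup.one_eq_mk).symm,
      map_one]
    rfl
  | cons p t iht =>
    have hsplit : FreeGroup.mk (p :: t) = FreeGroup.mk [p] * FreeGroup.mk t := by
      rw [FreeGroup.mul_mk]; rfl
    rw [hsplit, map_mul, iht,
      show expand v.toNat (p :: t)
        = List.replicate (if p.1 then v.toNat else 1) p ++ expand v.toNat t from rfl,
      ← FreeGroup.mul_mk]
    congr 1
    obtain ⟨x, s⟩ := p
    cases s
    · rw [show FreeGroup.mk [(x, false)] = (FreeGroup.of x)⁻¹ from (inv_of x).symm, map_inv,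
        FreeGroup.lift_apply_of]
      cases x
      · show a⁻¹ = FreeGroup.mk (List.replicate 1 (false, false))
        rw [show a = FreeGroup.of false from rfl, inv_of]
        rfl
      · show ((b : FreeGroup Bool) ^ v)⁻¹ = FreeGroup.mk (List.replicate v.toNat (true, false))
        rw [hbv, ← mk_single_pow, ← inv_pow,
          show FreeGroup.mk [((true : Bool), true)] = FreeGroup.of true from rfl, inv_of,
          mk_single_pow]
    · rw [show FreeGroup.mk [(x, true)] = FreeGroup.of x from rfl, FreeGroup.lift_apply_of]
      cases x
      · show a = FreeGroup.mk (List.replicate 1 (false, true))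
        rfl
      · exact hbv

end BBlocksAux

open BBlocksAux in
/-- For `u, v ≥ 2` and `H = ⟨a^u, a*b^v⟩ ≤ F(a,b)`: in the reduced word of any
element of `H`, every maximal block of consecutive `b^{±1}` letters has length a
multiple of `v`; in particular no element of `H` has a reduced word containing a
single `b^{±1}` letter flanked on both sides by `a^{±1}` letters.
(Letters are pairs: `(false, ε)` is `a^{±1}`, `(true, ε)` is `b^{±1}`; a block of
`b`-letters is maximal when the letter just before it and the letter just after it,
if any, are `a`-letters.) -/
theorem b_blocks_of_subgroup (u v : ℤ) (hu : 2 ≤ u) (hv : 2 ≤ v)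
    (g : FreeGroup Bool) (hg : g ∈ Subgroup.closure {a ^ u, a * b ^ v}) :
    (∀ l₁ blk l₂ : List (Bool × Bool),
      g.toWord = l₁ ++ blk ++ l₂ →
      (∀ p ∈ blk, p.1 = true) →
      (∀ p ∈ l₁.getLast?, p.1 = false) →
      (∀ p ∈ l₂.head?, p.1 = false) →
      v ∣ (blk.length : ℤ)) ∧
    ¬ ∃ ε₁ ε₂ ε₃ : Bool,
      [(false, ε₁), (true, ε₂), (false, ε₃)] <:+: g.toWord := by
  have hnv : ((v.toNat : ℤ)) = v := Int.toNat_of_nonneg (by omega)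
  have hn1 : 1 ≤ v.toNat := by omega
  have hmem : g ∈ (FreeGroup.lift (fun x : Bool => if x then b ^ v else a)).range := by
    refine (Subgroup.closure_le _).2 ?_ hg
    intro x hx
    simp only [Set.mem_insert_iff, Set.mem_singleton_iff] at hx
    rcases hx with rfl | rfl
    · exact ⟨FreeGroup.of false ^ u, by rw [map_zpow, FreeGroup.lift_apply_of]; simp⟩
    · exact ⟨FreeGroup.of false * FreeGroup.of true,
        by rw [map_mul, FreeGroup.lift_apply_of, FreeGroup.lift_apply_of]; simp⟩
  obtain ⟨h, rfl⟩ := hmem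
  have hchain : List.Chain' C h.toWord := by
    have := chain_reduce h.toWord
    rwa [FreeGroup.reduce_toWord] at this
  have hword : (FreeGroup.lift (fun x : Bool => if x then b ^ v else a) h).toWord
      = expand v.toNat h.toWord := by
    conv_lhs => rw [← FreeGroup.mk_toWord (x := h)]
    rw [phi_mk v hv, FreeGroup.toWord_mk]
    exact reduce_of_chain _ (chain_expand v.toNat hn1 _ hchain)
  have main : ∀ l₁ blk l₂ : List (Bool × Bool),
      (FreeGroup.lift (fun x : Bool => if x then b ^ v else a) h).toWord = l₁ ++ blk ++ l₂ →
      (∀ p ∈ blk, p.1 = true) →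
      (∀ p ∈ l₁.getLast?, p.1 = false) →
      (∀ p ∈ l₂.head?, p.1 = false) →
      v ∣ (blk.length : ℤ) := by
    intro l₁ blk l₂ hsplit hb h1 h2
    rw [hword] at hsplit
    have := block_dvd v.toNat hn1 h.toWord l₁ blk l₂ hsplit hb h1 h2
    rw [← hnv]
    exact Int.natCast_dvd_natCast.2 this
  refine ⟨main, ?_⟩
  rintro ⟨ε₁, ε₂, ε₃, s, t, hst⟩
  have hdvd : v ∣ ((([((true : Bool), ε₂)]).length : ℕ) : ℤ) := by
    refine main (s ++ [(false, ε₁)]) [(true, ε₂)] ((false, ε₃) :: t) ?_ ?_ ?_ ?_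
    · rw [← hst]; simp
    · intro p hp
      simp only [List.mem_singleton] at hp
      rw [hp]
    · intro p hp
      rw [List.getLast?_concat] at hp
      obtain rfl : ((false : Bool), ε₁) = p := by simpa using hp
      rfl
    · intro p hp
      obtain rfl : ((false : Bool), ε₃) = p := by simpa using hp
      rfl
  simp only [List.length_singleton, Nat.cast_one] at hdvd
  have := Int.le_of_dvd one_pos hdvd
  omega
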